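/- Let q ≡ 7 (mod 8) and r ≡ 3 (mod 8), s ≡ 3 (mod 8) be distinct primes with (q/r) = (q/s) = -1. If a, b are positive integers satisfying a² - 1 = 2qrs·b², then there do not exist integers b₁, b₂ with a - 1 = r·b₁² and a + 1 = 2qs·b₂². -/
import Mathlib

/-- Let q ≡ 7 (mod 8) and r ≡ 3 (mod 8), s ≡ 3 (mod 8) be distinct primes with
(q/r) = (q/s) = -1. If a, b are positive integers satisfying a² - 1 = 2qrs·b², then there do
not exist integers b₁, b₂ with a - 1 = r·b₁² and a + 1 = 2qs·b₂². -/
theorem stmt3 (q r s : ℕ) (hq : q.Prime) (hr : r.Prime) (hs : s.Prime)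
    (hqr : q ≠ r) (hqs : q ≠ s) (hrs : r ≠ s)
    (hq8 : q % 8 = 7) (hr8 : r % 8 = 3) (hs8 : s % 8 = 3)
    (h1 : @legendreSym r ⟨hr⟩ (q : ℤ) = -1) (h2 : @legendreSym s ⟨hs⟩ (q : ℤ) = -1)
    (a b : ℤ) (ha : 0 < a) (hb : 0 < b) (hab : a ^ 2 - 1 = 2 * q * r * s * b ^ 2) :
    ¬ ∃ b₁ b₂ : ℤ, a - 1 = r * b₁ ^ 2 ∧ a + 1 = 2 * q * s * b₂ ^ 2 := by
  haveI fq : Fact q.Prime := ⟨hq⟩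
  haveI fr : Fact r.Prime := ⟨hr⟩
  rintro ⟨b₁, b₂, e1, e2⟩
  have hq2 : q ≠ 2 := by rintro rfl; norm_num at hq8
  have hr2 : r ≠ 2 := by rintro rfl; norm_num at hr8
  have hq4 : q % 4 = 3 := by omega
  have hr4 : r % 4 = 3 := by omega
  -- q divides a + 1
  have hdvd : (q : ℤ) ∣ a + 1 := ⟨2 * s * b₂ ^ 2, by rw [e2]; ring⟩
  -- hence a - 1 ≡ -2 mod q
  have hcast : ((a - 1 : ℤ) : ZMod q) = ((-2 : ℤ) : ZMod q) := by
    have : ((a + 1 : ℤ) : ZMod q) = 0 := by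
      exact_mod_cast (ZMod.intCast_zmod_eq_zero_iff_dvd _ _).mpr hdvd
    push_cast at this ⊢
    linear_combination this
  -- b₁ is not divisible by q
  have hb₁ : ((b₁ : ℤ) : ZMod q) ≠ 0 := by
    intro h0
    have hdvd1 : (q : ℤ) ∣ b₁ := (ZMod.intCast_zmod_eq_zero_iff_dvd _ _).mp h0
    have : (q : ℤ) ∣ a - 1 := e1 ▸ Dvd.dvd.mul_left (hdvd1.mul_left b₁ |>.trans (dvd_of_eq (sq b₁).symm) |> fun h => h) _
    have h2' : (q : ℤ) ∣ 2 := by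
      have := dvd_sub hdvd this
      simpa using this
    have : (q : ℤ) ≤ 2 := Int.le_of_dvd (by norm_num) h2'
    have : q ≤ 2 := by exact_mod_cast this
    omega
  -- compute legendreSym q (a-1) = χ₈' q = -1
  have key1 : legendreSym q (a - 1) = -1 := by
    have : legendreSym q (a - 1) = legendreSym q (-2) := by
      unfold legendreSym
      rw [hcast]
    rw [this, legendreSym.at_neg_two hq2, ZMod.χ₈'_nat_eq_if_mod_eight]
    simp [hq8]
    omega
  -- compute legendreSym q (a-1) = legendreSym q r = -(legendreSym r q) = 1
  have key2 : legendreSym q (a - 1) = 1 := by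
    rw [e1, legendreSym.mul, legendreSym.sq_one' (p := q) hb₁, mul_one,
      legendreSym.quadratic_reciprocity_three_mod_four hr4 hq4, h1]
    norm_num
  rw [key1] at key2
  norm_num at key2
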